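/- Let n ≥ 1 and let B ⊆ ℝ^{n+1} be a convex body containing no affine line, with 0 ∈ ∂B and B ⊆ {x ∈ ℝ^{n+1} : x₁ ≥ 0}, and suppose the first standard basis vector e₁ lies in (int N) ∩ R, where N and R are the normal cone (with respect to the standard Euclidean inner product) and recession cone of B. Let H = {x ∈ ℝ^{n+1} : x₁ = 0}, let Π : ℝ^{n+1} → H be the orthogonal projection, and let D = Π(∂B). Then D is a convex subset of H and, writing int_H D for its interior relative to H: (1) for every p ∈ int_H D, the fiber ∂B ∩ Π⁻¹(p) consists of exactly one point p + u(p)e₁, and the resulting function u : int_H D → ℝ is convex; (2) for every p ∈ D ∖ int_H D, the fiber ∂B ∩ Π⁻¹(p) is a closed half-line of the form {q₀ + t e₁ : t ≥ 0} for some q₀ ∈ ∂B with Π(q₀) = p. -/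

import Mathlib

open Set RealInnerProductSpace

noncomputable section

/-- The normal cone of a convex body `B` with respect to the standard Euclidean
inner product. -/
def euclNormalCone {n : ℕ} (B : Set (EuclideanSpace ℝ (Fin (n + 1)))) :
    Set (EuclideanSpace ℝ (Fin (n + 1))) :=
  {w | w ≠ 0 ∧ ∃ p ∈ frontier B, ∀ x ∈ B, 0 ≤ ⟪x - p, w⟫}

/-- The recession cone of a convex body `B`. -/
def recessionCone {n : ℕ} (B : Set (EuclideanSpace ℝ (Fin n))) :
    Set (EuclideanSpace ℝ (Fin n)) :=
  {v | ∀ x ∈ B, ∀ t : ℝ, 0 ≤ t → x + t • v ∈ B}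

/-- The first standard basis vector `e₁` of `ℝ^(n+1)`. -/
def e₁ (n : ℕ) : EuclideanSpace ℝ (Fin (n + 1)) :=
  EuclideanSpace.single 0 1

/-- Orthogonal projection of `ℝ^(n+1)` onto the hyperplane `H = {x : x₁ = 0}`. -/
def projH {n : ℕ} (x : EuclideanSpace ℝ (Fin (n + 1))) :
    EuclideanSpace ℝ (Fin (n + 1)) :=
  x - x 0 • e₁ n

/-- The interior of `D` relative to the hyperplane `H = {x : x₁ = 0}`. -/
def relIntH {n : ℕ} (D : Set (EuclideanSpace ℝ (Fin (n + 1)))) :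
    Set (EuclideanSpace ℝ (Fin (n + 1))) :=
  {p | p 0 = 0 ∧ ∃ ε > 0, ∀ q : EuclideanSpace ℝ (Fin (n + 1)),
    q 0 = 0 → dist q p < ε → q ∈ D}

variable {n : ℕ}

lemma e₁_zero : (e₁ n) 0 = 1 := by simp [e₁, EuclideanSpace.single_apply]
lemma norm_e₁ : ‖e₁ n‖ = 1 := by simp [e₁]
lemma add_smul_zero (p : EuclideanSpace ℝ (Fin (n+1))) (t : ℝ) :
    (p + t • e₁ n) 0 = p 0 + t := by simp [e₁, EuclideanSpace.single_apply]
lemma projH_zero (x : EuclideanSpace ℝ (Fin (n+1))) : projH x 0 = 0 := by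
  simp [projH, e₁, EuclideanSpace.single_apply]
lemma projH_add_self (x : EuclideanSpace ℝ (Fin (n+1))) : projH x + x 0 • e₁ n = x := by
  simp [projH]
lemma projH_add_smul {p : EuclideanSpace ℝ (Fin (n+1))} (hp : p 0 = 0) (t : ℝ) :
    projH (p + t • e₁ n) = p := by
  unfold projH; rw [add_smul_zero, hp, zero_add]; module

/-- fiber set of heights over `p` -/
def fibS {n : ℕ} (B : Set (EuclideanSpace ℝ (Fin (n+1)))) (p : EuclideanSpace ℝ (Fin (n+1))) :
    Set ℝ := {t : ℝ | p + t • e₁ n ∈ B}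
def uF {n : ℕ} (B : Set (EuclideanSpace ℝ (Fin (n+1)))) (p : EuclideanSpace ℝ (Fin (n+1))) :
    ℝ := sInf (fibS B p)

section ctx
variable {B : Set (EuclideanSpace ℝ (Fin (n + 1)))}
  (hconv : Convex ℝ B) (hclosed : IsClosed B)
  (hhalf : ∀ x ∈ B, 0 ≤ x 0) (he₁R : e₁ n ∈ recessionCone B)

include hhalf in
lemma fibS_bdd {p : EuclideanSpace ℝ (Fin (n+1))} (hp : p 0 = 0) : BddBelow (fibS B p) := by
  refine ⟨0, fun t ht => ?_⟩
  have := hhalf _ ht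
  rwa [add_smul_zero, hp, zero_add] at this

include hclosed in
lemma fibS_closed (p : EuclideanSpace ℝ (Fin (n+1))) : IsClosed (fibS B p) := by
  have : Continuous fun t : ℝ => p + t • e₁ n := by continuity
  exact hclosed.preimage this

include hclosed hhalf in
lemma uF_mem {p : EuclideanSpace ℝ (Fin (n+1))} (hp : p 0 = 0) (hne : (fibS B p).Nonempty) :
    p + uF B p • e₁ n ∈ B :=
  (fibS_closed hclosed p).csInf_mem hne (fibS_bdd hhalf hp)

include he₁R in
lemma fibS_up {p : EuclideanSpace ℝ (Fin (n+1))} {t s : ℝ} (ht : t ∈ fibS B p) (hts : t ≤ s) :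
    s ∈ fibS B p := by
  have h := he₁R _ ht (s - t) (by linarith)
  have he : p + t • e₁ n + (s - t) • e₁ n = p + s • e₁ n := by module
  rwa [he] at h

include hclosed hhalf in
lemma uF_frontier {p : EuclideanSpace ℝ (Fin (n+1))} (hp : p 0 = 0)
    (hne : (fibS B p).Nonempty) : p + uF B p • e₁ n ∈ frontier B := by
  rw [hclosed.frontier_eq]
  refine ⟨uF_mem hclosed hhalf hp hne, fun hin => ?_⟩
  obtain ⟨δ, δpos, hδ⟩ := Metric.isOpen_iff.mp isOpen_interior _ hin
  have hmem : p + (uF B p - δ/2) • e₁ n ∈ B := by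
    refine interior_subset (hδ ?_)
    rw [Metric.mem_ball, dist_eq_norm]
    have he : p + (uF B p - δ/2) • e₁ n - (p + uF B p • e₁ n) = (-(δ/2)) • e₁ n := by module
    rw [he, norm_smul, norm_e₁]
    simp [abs_of_pos δpos]
    linarith
  have := csInf_le (fibS_bdd hhalf hp) hmem
  have : uF B p ≤ uF B p - δ/2 := this
  linarith

include hclosed hhalf he₁R in
lemma projD_eq : projH '' frontier B = {p | p 0 = 0 ∧ (fibS B p).Nonempty} := by
  ext p
  constructor
  · rintro ⟨x, hx, rfl⟩
    refine ⟨projH_zero x, x 0, ?_⟩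
    have hxB : x ∈ B := hclosed.frontier_subset hx
    show projH x + x 0 • e₁ n ∈ B
    rwa [projH_add_self]
  · rintro ⟨hp0, hne⟩
    exact ⟨p + uF B p • e₁ n, uF_frontier hclosed hhalf hp0 hne, projH_add_smul hp0 _⟩

end ctx

section ctx2
variable {B : Set (EuclideanSpace ℝ (Fin (n + 1)))}
  (hconv : Convex ℝ B) (hclosed : IsClosed B)
  (hhalf : ∀ x ∈ B, 0 ≤ x 0) (he₁R : e₁ n ∈ recessionCone B)

include hconv hclosed hhalf in
lemma fib_combo {p q : EuclideanSpace ℝ (Fin (n+1))}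
    (hp0 : p 0 = 0) (hpne : (fibS B p).Nonempty)
    (hq0 : q 0 = 0) (hqne : (fibS B q).Nonempty)
    {a b : ℝ} (ha : 0 ≤ a) (hb : 0 ≤ b) (hab : a + b = 1) :
    a * uF B p + b * uF B q ∈ fibS B (a • p + b • q) := by
  have h := hconv (uF_mem hclosed hhalf hp0 hpne) (uF_mem hclosed hhalf hq0 hqne) ha hb hab
  have he : a • (p + uF B p • e₁ n) + b • (q + uF B q • e₁ n)
      = (a • p + b • q) + (a * uF B p + b * uF B q) • e₁ n := by module
  rwa [he] at h

include hconv hclosed hhalf he₁R in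
lemma fib_interior (hint : (interior B).Nonempty)
    {p : EuclideanSpace ℝ (Fin (n+1))} (hp0 : p 0 = 0)
    {ε : ℝ} (εpos : 0 < ε)
    (hball : ∀ q : EuclideanSpace ℝ (Fin (n+1)), q 0 = 0 → dist q p < ε → (fibS B q).Nonempty)
    {t : ℝ} (ht : uF B p < t) : p + t • e₁ n ∈ interior B := by
  obtain ⟨z, hz⟩ := hint
  set d := p - projH z with hd
  have hd0 : d 0 = 0 := by
    rw [hd]; show p 0 - projH z 0 = 0; rw [hp0, projH_zero]; ring
  set l := ε / (2 * (‖d‖ + 1)) with hl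
  have hlpos : 0 < l := by positivity
  have hlne : l ≠ 0 := ne_of_gt hlpos
  have hn0 : (0:ℝ) ≤ ‖d‖ := norm_nonneg d
  have hld : l * ‖d‖ < ε := by
    rw [hl, div_mul_eq_mul_div, div_lt_iff₀ (by positivity)]
    nlinarith
  have hpl0 : (p + l • d) 0 = 0 := by
    have : (p + l • d) 0 = p 0 + l * d 0 := by simp
    rw [this, hp0, hd0]; ring
  have hpldist : dist (p + l • d) p < ε := by
    rw [dist_eq_norm]
    have he : p + l • d - p = l • d := by module
    rw [he, norm_smul, Real.norm_eq_abs, abs_of_pos hlpos]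
    exact hld
  have hplne : (fibS B (p + l • d)).Nonempty := hball _ hpl0 hpldist
  have hpne : (fibS B p).Nonempty := hball p hp0 (by simpa using εpos)
  have hmp : p + uF B p • e₁ n ∈ B := uF_mem hclosed hhalf hp0 hpne
  have ha1 : (p + l • d) + uF B (p + l • d) • e₁ n ∈ B := uF_mem hclosed hhalf hpl0 hplne
  set M := uF B (p + l • d) with hM
  set K := (M - uF B p)/l - (t - z 0) with hK
  set m := min l ((t - uF B p)/(|K|+1)) with hm
  have habs : (0:ℝ) < |K| + 1 := by positivity
  have hmpos : 0 < m := lt_min hlpos (div_pos (by linarith) habs)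
  have hml : m ≤ l := min_le_left _ _
  have hmK : m * K ≤ t - uF B p := by
    have h1 : m * K ≤ m * (|K| + 1) := by nlinarith [le_abs_self K]
    have h2 : m * (|K| + 1) ≤ ((t - uF B p)/(|K|+1)) * (|K|+1) :=
      mul_le_mul_of_nonneg_right (min_le_right _ _) (le_of_lt habs)
    rw [div_mul_cancel₀ _ (ne_of_gt habs)] at h2
    linarith
  have hθ0 : (0:ℝ) ≤ m / l := le_of_lt (div_pos hmpos hlpos)
  have hθ1 : m / l ≤ 1 := (div_le_one hlpos).mpr hml
  have hb : (1 - m/l) • (p + uF B p • e₁ n) + (m/l) • ((p + l • d) + M • e₁ n) ∈ B :=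
    hconv hmp ha1 (by linarith) hθ0 (by ring)
  set w0 := t + m * (t - z 0) with hw0
  have hwh : (1 - m/l) * uF B p + (m/l) * M ≤ w0 := by
    have hθM : (m/l) * (M - uF B p) = m * K + m * (t - z 0) := by
      rw [hK]; field_simp; ring
    rw [hw0]
    have h3 : (1 - m/l) * uF B p + (m/l) * M = uF B p + (m/l) * (M - uF B p) := by ring
    rw [h3, hθM]
    linarith
  have hw : p + m • d + w0 • e₁ n ∈ B := by
    have h2 := he₁R _ hb (w0 - ((1 - m/l) * uF B p + (m/l) * M)) (by linarith)
    have he : (1 - m/l) • (p + uF B p • e₁ n) + (m/l) • ((p + l • d) + M • e₁ n)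
        + (w0 - ((1 - m/l) * uF B p + (m/l) * M)) • e₁ n
        = p + m • d + w0 • e₁ n := by
      match_scalars <;> field_simp <;> ring
    rwa [he] at h2
  have h1m : (1 + m) ≠ 0 := by positivity
  have hsum : m/(1+m) + 1/(1+m) = 1 := by
    rw [← add_div, add_comm, div_self h1m]
  have hq : (m/(1+m)) • z + (1/(1+m)) • (p + m • d + w0 • e₁ n) = p + t • e₁ n := by
    rw [show z = projH z + z 0 • e₁ n from (projH_add_self z).symm, hd, hw0]
    match_scalars <;> field_simp <;> ring
  have hfin := hconv.combo_interior_self_mem_interior hz hw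
    (div_pos hmpos (by linarith)) (le_of_lt (div_pos one_pos (by linarith))) hsum
  rwa [hq] at hfin

end ctx2


theorem stmt_13 (n : ℕ) (hn : 1 ≤ n)
    (B : Set (EuclideanSpace ℝ (Fin (n + 1))))
    (hconv : Convex ℝ B) (hclosed : IsClosed B) (hint : (interior B).Nonempty)
    (hnoline : ∀ a d : EuclideanSpace ℝ (Fin (n + 1)), d ≠ 0 → ∃ t : ℝ, a + t • d ∉ B)
    (h0 : (0 : EuclideanSpace ℝ (Fin (n + 1))) ∈ frontier B)
    (hhalf : ∀ x ∈ B, 0 ≤ x 0)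
    (he₁N : e₁ n ∈ interior (euclNormalCone B))
    (he₁R : e₁ n ∈ recessionCone B) :
    (∀ x ∈ projH '' frontier B, x 0 = 0) ∧
    Convex ℝ (projH '' frontier B) ∧
    -- (1) over the relative interior of D, the boundary is the graph of a convex function
    (∃ u : EuclideanSpace ℝ (Fin (n + 1)) → ℝ,
      ConvexOn ℝ (relIntH (projH '' frontier B)) u ∧
      ∀ p ∈ relIntH (projH '' frontier B),
        frontier B ∩ projH ⁻¹' {p} = {p + u p • e₁ n}) ∧
    -- (2) over boundary points of D, the fibers are vertical closed half-lines
    (∀ p ∈ (projH '' frontier B) \ relIntH (projH '' frontier B),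
      ∃ q₀ ∈ frontier B, projH q₀ = p ∧
        frontier B ∩ projH ⁻¹' {p} = (fun t : ℝ => q₀ + t • e₁ n) '' Ici (0 : ℝ)) := by
  have hD := projD_eq hclosed hhalf he₁R (B := B)
  -- Convexity of D
  have hDconv : Convex ℝ (projH '' frontier B) := by
    rw [hD]
    intro p hp q hq a b ha hb hab
    have hc0 : (a • p + b • q) 0 = 0 := by
      have : (a • p + b • q) 0 = a * p 0 + b * q 0 := by simp
      rw [this, hp.1, hq.1]; ring
    exact ⟨hc0, _, fib_combo hconv hclosed hhalf hp.1 hp.2 hq.1 hq.2 ha hb hab⟩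
  -- membership in D from relative interior
  have hsub : ∀ p ∈ relIntH (projH '' frontier B), p 0 = 0 ∧ (fibS B p).Nonempty := by
    rintro p ⟨hp0, ε, εpos, hball⟩
    have h := hball p hp0 (by simpa using εpos)
    rwa [hD] at h
  -- interior points of B over relative interior of D
  have hintm : ∀ p ∈ relIntH (projH '' frontier B), ∀ t : ℝ, uF B p < t →
      p + t • e₁ n ∈ interior B := by
    rintro p ⟨hp0, ε, εpos, hball⟩ t ht
    refine fib_interior hconv hclosed hhalf he₁R hint hp0 εpos (fun q hq0 hqd => ?_) ht
    have := hball q hq0 hqd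
    rw [hD] at this
    exact this.2
  refine ⟨?_, hDconv, ⟨uF B, ⟨?_, ?_⟩, ?_⟩, ?_⟩
  · rintro x ⟨y, -, rfl⟩
    exact projH_zero y
  · -- convexity of relIntH D
    rintro p hp q hq a b ha hb hab
    obtain ⟨hp0, εp, εppos, hpε⟩ := hp
    obtain ⟨hq0, εq, εqpos, hqε⟩ := hq
    have hr0 : (a • p + b • q) 0 = 0 := by
      have : (a • p + b • q) 0 = a * p 0 + b * q 0 := by simp
      rw [this, hp0, hq0]; ring
    refine ⟨hr0, min εp εq, lt_min εppos εqpos, fun q' hq'0 hq'd => ?_⟩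
    set v := q' - (a • p + b • q) with hv
    have hv0 : v 0 = 0 := by
      rw [hv]; show q' 0 - (a • p + b • q) 0 = 0; rw [hq'0, hr0]; ring
    have hvnorm : ‖v‖ < min εp εq := by
      rw [hv, ← dist_eq_norm]; exact hq'd
    have h1 : p + v ∈ projH '' frontier B := by
      refine hpε _ ?_ ?_
      · have : (p + v) 0 = p 0 + v 0 := by simp
        rw [this, hp0, hv0]; ring
      · rw [dist_eq_norm, show p + v - p = v from by module]
        exact lt_of_lt_of_le hvnorm (min_le_left _ _)
    have h2 : q + v ∈ projH '' frontier B := by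
      refine hqε _ ?_ ?_
      · have : (q + v) 0 = q 0 + v 0 := by simp
        rw [this, hq0, hv0]; ring
      · rw [dist_eq_norm, show q + v - q = v from by module]
        exact lt_of_lt_of_le hvnorm (min_le_right _ _)
    have h3 := hDconv h1 h2 ha hb hab
    have he : a • (p + v) + b • (q + v) = a • p + b • q + (a + b) • v := by module
    rw [he, hab, one_smul, hv] at h3
    rwa [show a • p + b • q + (q' - (a • p + b • q)) = q' from by module] at h3
  · -- convexity inequality for uF
    intro p hp q hq a b ha hb hab
    obtain ⟨hp0, hpne⟩ := hsub p hp
    obtain ⟨hq0, hqne⟩ := hsub q hq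
    have hc0 : (a • p + b • q) 0 = 0 := by
      have : (a • p + b • q) 0 = a * p 0 + b * q 0 := by simp
      rw [this, hp0, hq0]; ring
    have := csInf_le (fibS_bdd hhalf hc0)
      (fib_combo hconv hclosed hhalf hp0 hpne hq0 hqne ha hb hab)
    simpa [uF, smul_eq_mul] using this
  · -- fibers over relative interior
    intro p hp
    obtain ⟨hp0, hpne⟩ := hsub p hp
    ext x
    simp only [mem_inter_iff, mem_preimage, mem_singleton_iff]
    constructor
    · rintro ⟨hxf, hxp⟩
      have hxB := hclosed.frontier_subset hxf
      have hx : x = p + x 0 • e₁ n := by rw [← hxp]; exact (projH_add_self x).symm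
      have hx0 : x 0 ∈ fibS B p := by show p + x 0 • e₁ n ∈ B; rw [← hx]; exact hxB
      have h1 : uF B p ≤ x 0 := csInf_le (fibS_bdd hhalf hp0) hx0
      rcases eq_or_lt_of_le h1 with heq | hlt
      · conv_lhs => rw [hx]
        rw [heq]
      · exfalso
        have hxint := hintm p hp _ hlt
        rw [← hx] at hxint
        rw [hclosed.frontier_eq] at hxf
        exact hxf.2 hxint
    · rintro rfl
      exact ⟨uF_frontier hclosed hhalf hp0 hpne, projH_add_smul hp0 _⟩
  · -- fibers over D minus relative interior
    rintro p ⟨hpD, hpn⟩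
    rw [hD] at hpD
    obtain ⟨hp0, hpne⟩ := hpD
    have hnoint : ∀ s : ℝ, p + s • e₁ n ∉ interior B := by
      intro s hs
      obtain ⟨δ, δpos, hδ⟩ := Metric.isOpen_iff.mp isOpen_interior _ hs
      refine hpn ⟨hp0, δ, δpos, fun q' hq'0 hq'd => ?_⟩
      rw [hD]
      refine ⟨hq'0, s, ?_⟩
      show q' + s • e₁ n ∈ B
      refine interior_subset (hδ ?_)
      rw [Metric.mem_ball, dist_eq_norm,
        show q' + s • e₁ n - (p + s • e₁ n) = q' - p from by module, ← dist_eq_norm]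
      exact hq'd
    refine ⟨p + uF B p • e₁ n, uF_frontier hclosed hhalf hp0 hpne, projH_add_smul hp0 _, ?_⟩
    ext x
    simp only [mem_inter_iff, mem_preimage, mem_singleton_iff, mem_image, mem_Ici]
    constructor
    · rintro ⟨hxf, hxp⟩
      have hxB := hclosed.frontier_subset hxf
      have hx : x = p + x 0 • e₁ n := by rw [← hxp]; exact (projH_add_self x).symm
      have hx0 : x 0 ∈ fibS B p := by show p + x 0 • e₁ n ∈ B; rw [← hx]; exact hxB
      have h1 : uF B p ≤ x 0 := csInf_le (fibS_bdd hhalf hp0) hx0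
      refine ⟨x 0 - uF B p, by linarith, ?_⟩
      conv_rhs => rw [hx]
      module
    · rintro ⟨s, hs0, rfl⟩
      rw [show p + uF B p • e₁ n + s • e₁ n = p + (uF B p + s) • e₁ n from by module]
      have hmem : p + (uF B p + s) • e₁ n ∈ B :=
        fibS_up he₁R (uF_mem hclosed hhalf hp0 hpne) (by linarith)
      refine ⟨?_, projH_add_smul hp0 _⟩
      rw [hclosed.frontier_eq]
      exact ⟨hmem, hnoint _⟩

end
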